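/- Define Ω_n(c) (for n ∈ ℕ, 0 ≤ c < 1, φ ∈ ℝ) as the 4-fold integral -(1/(2π)²)·∫₀^∞∫₀^∞ e^{-(v₁²+v₂²)/4} ∫₀^{2π}∫₀^{2π} e^{-(c v₁ v₂/2) cos(q₁-q₂+φ)} · i^n (v₁ cos q₁ + v₂ cos q₂)^n · e^{i(q₁-q₂)} dq₁ dq₂ dv₁ dv₂. Then |Ω_n| < 2^{3n/2 - 1} · n · π · Γ(n/2) / (1-c)^{1+n/2} for all n ≥ 1. -/

import Mathlib

open MeasureTheory Real

open Set



lemma pow_le_factorial_mul_exp (n : ℕ) {x : ℝ} (hx : 0 ≤ x) :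
    x ^ n ≤ n.factorial * Real.exp x := by
  have h := Real.sum_le_exp_of_nonneg hx (n+1)
  have h2 : x ^ n / n.factorial ≤ ∑ i ∈ Finset.range (n+1), x ^ i / i.factorial := by
    refine Finset.single_le_sum (f := fun i => x ^ i / (i.factorial : ℝ)) ?_ (Finset.self_mem_range_succ n)
    intro i _
    positivity
  have h3 : x ^ n / n.factorial ≤ Real.exp x := h2.trans h
  have hfac : (0:ℝ) < n.factorial := by positivity
  calc x ^ n = n.factorial * (x ^ n / n.factorial) := by field_simp
  _ ≤ n.factorial * Real.exp x := by
      exact mul_le_mul_of_nonneg_left h3 hfac.le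

/-- key pointwise bound for integrability -/
lemma sqrt_pow_mul_exp_le (n : ℕ) {a : ℝ} (ha : 0 < a) {s : ℝ} (hs : 0 ≤ s) :
    Real.sqrt s ^ n * Real.exp (-a * s) ≤
      (1 + n.factorial * (2/a)^n) * Real.exp (-(a/2) * s) := by
  have key : Real.sqrt s ^ n ≤ (1 + n.factorial * (2/a)^n) * Real.exp ((a/2) * s) := by
    have hexp1 : (1:ℝ) ≤ Real.exp ((a/2)*s) := by
      rw [Real.one_le_exp_iff]; positivity
    rcases le_or_gt (Real.sqrt s) 1 with h | h
    · have : Real.sqrt s ^ n ≤ 1 := pow_le_one₀ (Real.sqrt_nonneg s) h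
      have hF : (0:ℝ) ≤ n.factorial * (2/a)^n := by positivity
      nlinarith [Real.exp_pos ((a/2)*s)]
    · have h1 : Real.sqrt s ^ n ≤ s ^ n := by
        refine pow_le_pow_left₀ (Real.sqrt_nonneg s) ?_ n
        nlinarith [Real.sq_sqrt hs, Real.sqrt_nonneg s]
      have h2 : s ^ n = (2/a)^n * ((a/2)*s)^n := by
        rw [← mul_pow]; congr 1; field_simp
      have h3 : ((a/2)*s)^n ≤ n.factorial * Real.exp ((a/2)*s) :=
        pow_le_factorial_mul_exp n (by positivity)
      have h4 : (0:ℝ) < (2/a)^n := pow_pos (by positivity) n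
      calc Real.sqrt s ^ n ≤ (2/a)^n * ((a/2)*s)^n := by rw [← h2]; exact h1
      _ ≤ (2/a)^n * (n.factorial * Real.exp ((a/2)*s)) := by
          exact mul_le_mul_of_nonneg_left h3 h4.le
      _ ≤ (1 + n.factorial * (2/a)^n) * Real.exp ((a/2)*s) := by
          rw [add_mul, one_mul]
          nlinarith [Real.exp_pos ((a/2)*s)]
  calc Real.sqrt s ^ n * Real.exp (-a * s)
      ≤ ((1 + n.factorial * (2/a)^n) * Real.exp ((a/2) * s)) * Real.exp (-a * s) := by
        exact mul_le_mul_of_nonneg_right key (Real.exp_pos _).le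
  _ = (1 + n.factorial * (2/a)^n) * Real.exp (-(a/2) * s) := by
      rw [mul_assoc, ← Real.exp_add]; ring_nf


lemma continuous_F (n : ℕ) (a : ℝ) :
    Continuous (fun p : ℝ × ℝ => Real.sqrt (p.1^2+p.2^2) ^ n * Real.exp (-a * (p.1^2+p.2^2))) := by
  have h : Continuous (fun p : ℝ × ℝ => p.1^2 + p.2^2) :=
    ((continuous_fst.pow 2).add (continuous_snd.pow 2))
  exact ((Real.continuous_sqrt.comp h).pow n).mul ((h.const_smul (-a)).rexp)

lemma integrable_F (n : ℕ) {a : ℝ} (ha : 0 < a) :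
    Integrable (fun p : ℝ × ℝ => Real.sqrt (p.1^2+p.2^2) ^ n * Real.exp (-a * (p.1^2+p.2^2))) := by
  set C := 1 + (n.factorial : ℝ) * (2/a)^n with hC
  have hint : Integrable (fun p : ℝ × ℝ =>
      C * (Real.exp (-(a/2) * p.1^2) * Real.exp (-(a/2) * p.2^2))) := by
    rw [Measure.volume_eq_prod]
    exact ((integrable_exp_neg_mul_sq (by positivity : (0:ℝ) < a/2)).mul_prod
      (integrable_exp_neg_mul_sq (by positivity : (0:ℝ) < a/2))).const_mul C
  refine hint.mono' ((continuous_F n a).aestronglyMeasurable) ?_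
  filter_upwards with p
  have hs : (0:ℝ) ≤ p.1^2 + p.2^2 := by positivity
  have h := sqrt_pow_mul_exp_le n ha hs
  rw [Real.norm_of_nonneg (by positivity)]
  calc Real.sqrt (p.1^2+p.2^2) ^ n * Real.exp (-a * (p.1^2+p.2^2))
      ≤ C * Real.exp (-(a/2) * (p.1^2+p.2^2)) := h
  _ = C * (Real.exp (-(a/2) * p.1^2) * Real.exp (-(a/2) * p.2^2)) := by
      rw [← Real.exp_add]; ring_nf

lemma integrable_F_slice (n : ℕ) {a : ℝ} (ha : 0 < a) (v₁ : ℝ) :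
    Integrable (fun v₂ : ℝ => Real.sqrt (v₁^2+v₂^2) ^ n * Real.exp (-a * (v₁^2+v₂^2))) := by
  set C := 1 + (n.factorial : ℝ) * (2/a)^n with hC
  have hint : Integrable (fun v₂ : ℝ => C * Real.exp (-(a/2) * v₂^2)) :=
    (integrable_exp_neg_mul_sq (by positivity : (0:ℝ) < a/2)).const_mul C
  have hcont : Continuous (fun v₂ : ℝ => Real.sqrt (v₁^2+v₂^2) ^ n * Real.exp (-a * (v₁^2+v₂^2))) := by
    have h : Continuous (fun v₂ : ℝ => v₁^2 + v₂^2) := continuous_const.add (continuous_pow 2)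
    exact ((Real.continuous_sqrt.comp h).pow n).mul ((h.const_smul (-a)).rexp)
  refine hint.mono' hcont.aestronglyMeasurable ?_
  filter_upwards with v₂
  have hs : (0:ℝ) ≤ v₁^2 + v₂^2 := by positivity
  have h := sqrt_pow_mul_exp_le n ha hs
  rw [Real.norm_of_nonneg (by positivity)]
  refine h.trans ?_
  have : Real.exp (-(a/2) * (v₁^2+v₂^2)) ≤ Real.exp (-(a/2) * v₂^2) := by
    apply Real.exp_le_exp.mpr; nlinarith [sq_nonneg v₁]
  have hCpos : (0:ℝ) ≤ C := by positivity
  exact mul_le_mul_of_nonneg_left this hCpos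


lemma polar_symm_eq (p : ℝ × ℝ) :
    polarCoord.symm p = (p.1 * Real.cos p.2, p.1 * Real.sin p.2) := rfl

lemma polar_target_eq : polarCoord.target = Ioi (0:ℝ) ×ˢ Ioo (-π) π := rfl

lemma integral_F_quarter (n : ℕ) {a : ℝ} (ha : 0 < a) :
    ∫ v₁ in Ioi (0:ℝ), ∫ v₂ in Ioi (0:ℝ),
        Real.sqrt (v₁^2+v₂^2) ^ n * Real.exp (-a * (v₁^2+v₂^2))
      = (π/4) * a ^ (-((n:ℝ)+2)/2) * Real.Gamma (((n:ℝ)+2)/2) := by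
  set F : ℝ × ℝ → ℝ :=
    fun p => Real.sqrt (p.1^2+p.2^2) ^ n * Real.exp (-a * (p.1^2+p.2^2)) with hFdef
  have hF : Integrable F := integrable_F n ha
  have hFprod : Integrable F (volume.prod volume) := by
    rw [← Measure.volume_eq_prod]; exact hF
  -- Step A : iterated = product set integral
  have stepA : ∫ v₁ in Ioi (0:ℝ), ∫ v₂ in Ioi (0:ℝ), F (v₁, v₂)
      = ∫ p in (Ioi (0:ℝ)) ×ˢ (Ioi (0:ℝ)), F p := by
    rw [Measure.volume_eq_prod]
    exact (setIntegral_prod F hFprod.integrableOn).symm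
  -- Step B : full integral = 4 * quarter
  have hslice : ∀ x : ℝ, ∫ y, F (x, y) = 2 * ∫ y in Ioi (0:ℝ), F (x, y) := by
    intro x
    rw [← integral_comp_abs (f := fun y => Real.sqrt (x^2+y^2) ^ n * Real.exp (-a * (x^2+y^2)))]
    refine integral_congr_ae (Filter.Eventually.of_forall fun y => ?_)
    simp only [hFdef, sq_abs]
  have stepB : ∫ p, F p = 4 * ∫ v₁ in Ioi (0:ℝ), ∫ v₂ in Ioi (0:ℝ), F (v₁, v₂) := by
    rw [Measure.volume_eq_prod, integral_prod F hFprod]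
    calc ∫ x : ℝ, ∫ y : ℝ, F (x, y)
        = ∫ x : ℝ, 2 * ∫ y in Ioi (0:ℝ), F (x, y) :=
          integral_congr_ae (Filter.Eventually.of_forall fun x => hslice x)
      _ = 2 * ∫ x : ℝ, ∫ y in Ioi (0:ℝ), F (x, y) := integral_const_mul 2 _
      _ = 2 * (2 * ∫ x in Ioi (0:ℝ), ∫ y in Ioi (0:ℝ), F (x, y)) := by
          rw [← integral_comp_abs (f := fun x => ∫ y in Ioi (0:ℝ), F (x, y))]
          congr 1
          refine integral_congr_ae (Filter.Eventually.of_forall fun x => ?_)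
          simp only [hFdef, sq_abs]
      _ = 4 * ∫ v₁ in Ioi (0:ℝ), ∫ v₂ in Ioi (0:ℝ), F (v₁, v₂) := by ring
  -- Step C : polar coordinates
  have stepC : ∫ p, F p
      = ∫ p in polarCoord.target, p.1 ^ ((n:ℝ)+1) * Real.exp (-a * p.1 ^ (2:ℝ)) := by
    rw [← integral_comp_polarCoord_symm F]
    refine setIntegral_congr_fun ?_ ?_
    · rw [polar_target_eq]; exact (measurableSet_Ioi.prod measurableSet_Ioo)
    · intro p hp
      rw [polar_target_eq] at hp
      have hp1 : (0:ℝ) < p.1 := hp.1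
      have hsq : (p.1 * Real.cos p.2)^2 + (p.1 * Real.sin p.2)^2 = p.1^2 := by
        have h := Real.sin_sq_add_cos_sq p.2
        nlinarith [h]
      simp only [hFdef, polar_symm_eq, smul_eq_mul]
      rw [hsq, Real.sqrt_sq hp1.le]
      have e1 : p.1 ^ ((n:ℝ)+1) = p.1 ^ (n+1) := by
        rw [← Real.rpow_natCast p.1 (n+1)]
        norm_num
      rw [e1, Real.rpow_two, pow_succ]
      ring
  -- Step D : evaluate the polar integral
  have hq : (-1:ℝ) < (n:ℝ)+1 := neg_one_lt_zero.trans_le (by positivity)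
  have hIr : IntegrableOn (fun r : ℝ => r ^ ((n:ℝ)+1) * Real.exp (-a * r ^ (2:ℝ))) (Ioi 0) := by
    have h := integrableOn_rpow_mul_exp_neg_mul_sq ha hq
    refine h.congr_fun (fun x _ => ?_) measurableSet_Ioi
    rw [Real.rpow_two]
  have stepD : ∫ p in polarCoord.target, p.1 ^ ((n:ℝ)+1) * Real.exp (-a * p.1 ^ (2:ℝ))
      = (2*π) * (a ^ (-(((n:ℝ)+1) + 1)/2) * (1/2) * Real.Gamma ((((n:ℝ)+1)+1)/2)) := by
    rw [polar_target_eq, Measure.volume_eq_prod]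
    have hprod : IntegrableOn
        (fun p : ℝ × ℝ => (fun r : ℝ => r ^ ((n:ℝ)+1) * Real.exp (-a * r ^ (2:ℝ))) p.1
          * (fun _ : ℝ => (1:ℝ)) p.2) ((Ioi (0:ℝ)) ×ˢ (Ioo (-π) π)) (volume.prod volume) := by
      rw [IntegrableOn, ← Measure.prod_restrict]
      exact Integrable.mul_prod hIr
        ((integrableOn_const_iff).mpr (Or.inr measure_Ioo_lt_top))
    have hfub := setIntegral_prod _ hprod
    simp only [mul_one] at hfub
    rw [hfub]
    have hinner : ∀ r : ℝ, (∫ _θ in Ioo (-π) π, r ^ ((n:ℝ)+1) * Real.exp (-a * r ^ (2:ℝ)))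
        = (2*π) * (r ^ ((n:ℝ)+1) * Real.exp (-a * r ^ (2:ℝ))) := by
      intro r
      rw [setIntegral_const, Real.volume_real_Ioo, smul_eq_mul]
      congr 1
      rw [max_eq_left (by linarith [pi_pos] : (0:ℝ) ≤ π - -π)]
      ring
    calc ∫ r in Ioi (0:ℝ), ∫ _θ in Ioo (-π) π, r ^ ((n:ℝ)+1) * Real.exp (-a * r ^ (2:ℝ))
        = ∫ r in Ioi (0:ℝ), (2*π) * (r ^ ((n:ℝ)+1) * Real.exp (-a * r ^ (2:ℝ))) :=
          setIntegral_congr_fun measurableSet_Ioi (fun r _ => hinner r)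
      _ = (2*π) * ∫ r in Ioi (0:ℝ), r ^ ((n:ℝ)+1) * Real.exp (-a * r ^ (2:ℝ)) :=
          integral_const_mul _ _
      _ = (2*π) * (a ^ (-(((n:ℝ)+1) + 1)/2) * (1/2) * Real.Gamma ((((n:ℝ)+1)+1)/2)) := by
          congr 1
          exact integral_rpow_mul_exp_neg_mul_rpow (by norm_num) hq ha
  have hkey : ∫ v₁ in Ioi (0:ℝ), ∫ v₂ in Ioi (0:ℝ), F (v₁, v₂)
      = (1/4) * ∫ p, F p := by rw [stepB]; ring
  rw [show (∫ v₁ in Ioi (0:ℝ), ∫ v₂ in Ioi (0:ℝ),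
        Real.sqrt (v₁^2+v₂^2) ^ n * Real.exp (-a * (v₁^2+v₂^2)))
      = ∫ v₁ in Ioi (0:ℝ), ∫ v₂ in Ioi (0:ℝ), F (v₁, v₂) from rfl, hkey, stepC, stepD]
  have e1 : -(((n:ℝ)+1) + 1)/2 = -((n:ℝ)+2)/2 := by ring
  have e2 : (((n:ℝ)+1) + 1)/2 = ((n:ℝ)+2)/2 := by ring
  rw [e1, e2]
  ring


lemma integrableOn_cos_sq : IntegrableOn (fun q : ℝ => Real.cos q ^ 2) (Ioo 0 (2*π)) := by
  exact ((Real.continuous_cos.pow 2).integrableOn_Icc).mono_set Ioo_subset_Icc_self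

lemma integral_cos_sq_Ioo : ∫ q in Ioo (0:ℝ) (2*π), Real.cos q ^ 2 = π := by
  rw [← integral_Ioc_eq_integral_Ioo,
    ← intervalIntegral.integral_of_le (by positivity : (0:ℝ) ≤ 2*π)]
  rw [integral_cos_sq]
  simp [Real.sin_two_pi, Real.cos_two_pi]

lemma integrableOn_Q (b : ℝ) :
    IntegrableOn (fun q : ℝ => (b + Real.cos q ^ 2 + 2)/4) (Ioo 0 (2*π)) := by
  have h1 : IntegrableOn (fun _ : ℝ => b + 2) (Ioo 0 (2*π)) :=
    (integrableOn_const_iff).mpr (Or.inr measure_Ioo_lt_top)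
  have h : IntegrableOn (fun q : ℝ => ((b+2) + Real.cos q ^ 2)/4) (Ioo 0 (2*π)) :=
    (h1.add integrableOn_cos_sq).div_const 4
  refine h.congr_fun (fun x _ => ?_) measurableSet_Ioo
  ring

lemma integral_Q (b : ℝ) :
    ∫ q in Ioo (0:ℝ) (2*π), (b + Real.cos q ^ 2 + 2)/4 = (2*π*b + 5*π)/4 := by
  have h1 : IntegrableOn (fun _ : ℝ => b + 2) (Ioo 0 (2*π)) :=
    (integrableOn_const_iff).mpr (Or.inr measure_Ioo_lt_top)
  have key : ∫ q in Ioo (0:ℝ) (2*π), (b + Real.cos q ^ 2 + 2)/4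
      = (∫ q in Ioo (0:ℝ) (2*π), ((fun _ => b + 2) q + (fun q => Real.cos q ^ 2) q))/4 := by
    rw [← integral_div]
    refine setIntegral_congr_fun measurableSet_Ioo (fun x _ => ?_)
    ring
  rw [key, integral_add h1 integrableOn_cos_sq, setIntegral_const, integral_cos_sq_Ioo,
    Real.volume_real_Ioo, smul_eq_mul, max_eq_left (by linarith [pi_pos] : (0:ℝ) ≤ 2*π - 0)]
  ring

lemma integral_R : ∫ q in Ioo (0:ℝ) (2*π), (2*π*(Real.cos q ^ 2) + 5*π)/4 = 3*π^2 := by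
  have h2 : ∫ q in Ioo (0:ℝ) (2*π), (2*π) * ((fun q => Real.cos q ^ 2) q)
      = (2*π) * π := by rw [integral_const_mul, integral_cos_sq_Ioo]
  have h1 : IntegrableOn (fun q : ℝ => (2*π) * Real.cos q ^ 2) (Ioo 0 (2*π)) :=
    integrableOn_cos_sq.const_mul _
  have h3 : IntegrableOn (fun _ : ℝ => 5*π) (Ioo 0 (2*π)) :=
    (integrableOn_const_iff).mpr (Or.inr measure_Ioo_lt_top)
  have key : ∫ q in Ioo (0:ℝ) (2*π), (2*π*(Real.cos q ^ 2) + 5*π)/4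
      = (∫ q in Ioo (0:ℝ) (2*π), ((fun q => (2*π) * Real.cos q ^ 2) q + (fun _ => 5*π) q))/4 := by
    rw [← integral_div]
  rw [key, integral_add h1 h3, h2, setIntegral_const, Real.volume_real_Ioo, smul_eq_mul,
    max_eq_left (by linarith [pi_pos] : (0:ℝ) ≤ 2*π - 0)]
  ring

lemma integrableOn_R :
    IntegrableOn (fun q : ℝ => (2*π*(Real.cos q ^ 2) + 5*π)/4) (Ioo 0 (2*π)) := by
  have h1 : IntegrableOn (fun q : ℝ => (2*π) * Real.cos q ^ 2) (Ioo 0 (2*π)) :=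
    integrableOn_cos_sq.const_mul _
  have h3 : IntegrableOn (fun _ : ℝ => 5*π) (Ioo 0 (2*π)) :=
    (integrableOn_const_iff).mpr (Or.inr measure_Ioo_lt_top)
  have h : IntegrableOn (fun q : ℝ => ((2*π) * Real.cos q ^ 2 + 5*π)/4) (Ioo 0 (2*π)) :=
    (h1.add h3).div_const 4
  exact h


lemma norm_integrand (n : ℕ) (c φ v₁ v₂ q₁ q₂ : ℝ) :
    ‖Complex.exp (-(((v₁^2 + v₂^2)/4 : ℝ) : ℂ)) *
      Complex.exp (-(((c*v₁*v₂/2) * Real.cos (q₁ - q₂ + φ) : ℝ) : ℂ)) *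
      Complex.I^n * (((v₁ * Real.cos q₁ + v₂ * Real.cos q₂ : ℝ) : ℂ))^n *
      Complex.exp (Complex.I * (((q₁ - q₂ : ℝ)) : ℂ))‖
    = Real.exp (-((v₁^2 + v₂^2)/4)) *
        Real.exp (-(c*v₁*v₂/2 * Real.cos (q₁ - q₂ + φ))) *
        |v₁ * Real.cos q₁ + v₂ * Real.cos q₂| ^ n := by
  simp only [norm_mul, norm_pow, Complex.norm_exp, Complex.norm_I,
    Complex.norm_real, Real.norm_eq_abs, one_pow]
  simp only [Complex.neg_re, Complex.ofReal_re, Complex.mul_re, Complex.I_re, Complex.I_im,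
    Complex.ofReal_im, zero_mul, one_mul, mul_zero, sub_zero, zero_sub, neg_zero, Real.exp_zero]
  ring

/-- Cauchy-Schwarz style pointwise bound for the integrand. -/
lemma pointwise_bound (n : ℕ) (hn : 1 ≤ n) {c : ℝ} (φ : ℝ) (hc0 : 0 ≤ c) (hc1 : c < 1)
    {v₁ v₂ : ℝ} (h1 : 0 ≤ v₁) (h2 : 0 ≤ v₂) (q₁ q₂ : ℝ) :
    ‖Complex.exp (-(((v₁^2 + v₂^2)/4 : ℝ) : ℂ)) *
      Complex.exp (-(((c*v₁*v₂/2) * Real.cos (q₁ - q₂ + φ) : ℝ) : ℂ)) *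
      Complex.I^n * (((v₁ * Real.cos q₁ + v₂ * Real.cos q₂ : ℝ) : ℂ))^n *
      Complex.exp (Complex.I * (((q₁ - q₂ : ℝ)) : ℂ))‖
    ≤ (Real.sqrt 2 ^ n *
        (Real.sqrt (v₁^2+v₂^2) ^ n * Real.exp (-((1-c)/4) * (v₁^2+v₂^2)))) *
      ((Real.cos q₁ ^ 2 + Real.cos q₂ ^ 2 + 2)/4) := by
  rw [norm_integrand]
  -- exponential part
  have hcos1 : Real.cos (q₁ - q₂ + φ) ≤ 1 := Real.cos_le_one _
  have hexp : Real.exp (-((v₁^2 + v₂^2)/4)) *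
      Real.exp (-(c*v₁*v₂/2 * Real.cos (q₁ - q₂ + φ)))
      ≤ Real.exp (-((1-c)/4) * (v₁^2+v₂^2)) := by
    rw [← Real.exp_add]
    apply Real.exp_le_exp.mpr
    have hv : 2*v₁*v₂ ≤ v₁^2 + v₂^2 := by nlinarith [sq_nonneg (v₁ - v₂)]
    have hcc : -(c*v₁*v₂/2 * Real.cos (q₁ - q₂ + φ)) ≤ c*(v₁^2+v₂^2)/4 := by
      have h3 : -Real.cos (q₁ - q₂ + φ) ≤ 1 := by
        nlinarith [Real.neg_one_le_cos (q₁ - q₂ + φ)]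
      have hvv : 0 ≤ c*v₁*v₂/2 := by positivity
      calc -(c*v₁*v₂/2 * Real.cos (q₁ - q₂ + φ))
          = (c*v₁*v₂/2) * (-Real.cos (q₁ - q₂ + φ)) := by ring
        _ ≤ (c*v₁*v₂/2) * 1 := mul_le_mul_of_nonneg_left h3 hvv
        _ ≤ c*(v₁^2+v₂^2)/4 := by nlinarith
    linarith
  -- polynomial part
  set s := Real.sqrt (v₁^2+v₂^2) with hs
  set t := Real.sqrt (Real.cos q₁ ^ 2 + Real.cos q₂ ^ 2) with ht
  have hs0 : 0 ≤ s := Real.sqrt_nonneg _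
  have ht0 : 0 ≤ t := Real.sqrt_nonneg _
  have hCS : |v₁ * Real.cos q₁ + v₂ * Real.cos q₂| ≤ s * t := by
    rw [← Real.sqrt_sq_eq_abs, ← Real.sqrt_mul (by positivity : (0:ℝ) ≤ v₁^2+v₂^2)]
    apply Real.sqrt_le_sqrt
    nlinarith [sq_nonneg (v₁ * Real.cos q₂ - v₂ * Real.cos q₁)]
  have hpoly : |v₁ * Real.cos q₁ + v₂ * Real.cos q₂| ^ n ≤ (s * t) ^ n :=
    pow_le_pow_left₀ (abs_nonneg _) hCS n
  -- bound t ^ n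
  have htn : t ^ n ≤ Real.sqrt 2 ^ n * ((Real.cos q₁ ^ 2 + Real.cos q₂ ^ 2 + 2)/4) := by
    set x := (Real.cos q₁ ^ 2 + Real.cos q₂ ^ 2)/2 with hx
    have hx0 : 0 ≤ x := by positivity
    have hx1 : x ≤ 1 := by
      have := Real.cos_sq_le_one q₁
      have := Real.cos_sq_le_one q₂
      simp only [hx]; nlinarith [Real.cos_sq_le_one q₁, Real.cos_sq_le_one q₂]
    have hteq : t = Real.sqrt 2 * Real.sqrt x := by
      rw [ht, hx, ← Real.sqrt_mul (by norm_num : (0:ℝ) ≤ 2)]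
      congr 1
      ring
    have hsx1 : Real.sqrt x ≤ 1 := by
      rw [show (1:ℝ) = Real.sqrt 1 from (Real.sqrt_one).symm]
      exact Real.sqrt_le_sqrt hx1
    have hsxn : Real.sqrt x ^ n ≤ Real.sqrt x := by
      calc Real.sqrt x ^ n ≤ Real.sqrt x ^ 1 :=
            pow_le_pow_of_le_one (Real.sqrt_nonneg x) hsx1 hn
        _ = Real.sqrt x := pow_one _
    have hsxQ : Real.sqrt x ≤ (x + 1)/2 := by
      nlinarith [Real.sq_sqrt hx0, Real.sqrt_nonneg x]
    have hQeq : (x + 1)/2 = (Real.cos q₁ ^ 2 + Real.cos q₂ ^ 2 + 2)/4 := by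
      rw [hx]; ring
    calc t ^ n = Real.sqrt 2 ^ n * Real.sqrt x ^ n := by rw [hteq, mul_pow]
      _ ≤ Real.sqrt 2 ^ n * Real.sqrt x := by
          exact mul_le_mul_of_nonneg_left hsxn (by positivity)
      _ ≤ Real.sqrt 2 ^ n * ((x + 1)/2) := by
          exact mul_le_mul_of_nonneg_left hsxQ (by positivity)
      _ = Real.sqrt 2 ^ n * ((Real.cos q₁ ^ 2 + Real.cos q₂ ^ 2 + 2)/4) := by rw [hQeq]
  -- combine
  have hQ0 : 0 ≤ (Real.cos q₁ ^ 2 + Real.cos q₂ ^ 2 + 2)/4 := by positivity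
  have hE0 : 0 ≤ Real.exp (-((v₁^2 + v₂^2)/4)) *
      Real.exp (-(c*v₁*v₂/2 * Real.cos (q₁ - q₂ + φ))) := by positivity
  calc Real.exp (-((v₁^2 + v₂^2)/4)) * Real.exp (-(c*v₁*v₂/2 * Real.cos (q₁ - q₂ + φ))) *
        |v₁ * Real.cos q₁ + v₂ * Real.cos q₂| ^ n
      ≤ Real.exp (-((v₁^2 + v₂^2)/4)) * Real.exp (-(c*v₁*v₂/2 * Real.cos (q₁ - q₂ + φ))) *
        (s ^ n * (Real.sqrt 2 ^ n * ((Real.cos q₁ ^ 2 + Real.cos q₂ ^ 2 + 2)/4))) := by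
        refine mul_le_mul_of_nonneg_left ?_ hE0
        calc |v₁ * Real.cos q₁ + v₂ * Real.cos q₂| ^ n ≤ (s*t)^n := hpoly
          _ = s^n * t^n := mul_pow s t n
          _ ≤ s ^ n * (Real.sqrt 2 ^ n * ((Real.cos q₁ ^ 2 + Real.cos q₂ ^ 2 + 2)/4)) :=
              mul_le_mul_of_nonneg_left htn (by positivity)
    _ ≤ Real.exp (-((1-c)/4) * (v₁^2+v₂^2)) *
        (s ^ n * (Real.sqrt 2 ^ n * ((Real.cos q₁ ^ 2 + Real.cos q₂ ^ 2 + 2)/4))) := by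
        refine mul_le_mul_of_nonneg_right hexp (by positivity)
    _ = (Real.sqrt 2 ^ n * (s ^ n * Real.exp (-((1-c)/4) * (v₁^2+v₂^2)))) *
        ((Real.cos q₁ ^ 2 + Real.cos q₂ ^ 2 + 2)/4) := by ring


lemma q_integral_bound (n : ℕ) (hn : 1 ≤ n) {c : ℝ} (φ : ℝ) (hc0 : 0 ≤ c) (hc1 : c < 1)
    {v₁ v₂ : ℝ} (h1 : 0 ≤ v₁) (h2 : 0 ≤ v₂) :
    ‖∫ q₁ in Ioo (0:ℝ) (2*π), ∫ q₂ in Ioo (0:ℝ) (2*π),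
        Complex.exp (-(((v₁^2 + v₂^2)/4 : ℝ) : ℂ)) *
        Complex.exp (-(((c*v₁*v₂/2) * Real.cos (q₁ - q₂ + φ) : ℝ) : ℂ)) *
        Complex.I^n * (((v₁ * Real.cos q₁ + v₂ * Real.cos q₂ : ℝ) : ℂ))^n *
        Complex.exp (Complex.I * (((q₁ - q₂ : ℝ)) : ℂ))‖
    ≤ (3*π^2 * Real.sqrt 2 ^ n) *
        (Real.sqrt (v₁^2+v₂^2) ^ n * Real.exp (-((1-c)/4) * (v₁^2+v₂^2))) := by
  set M := Real.sqrt 2 ^ n *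
      (Real.sqrt (v₁^2+v₂^2) ^ n * Real.exp (-((1-c)/4) * (v₁^2+v₂^2))) with hMdef
  have hM0 : 0 ≤ M := by positivity
  -- inner bound, for every q₁
  have inner_bound : ∀ q₁ : ℝ,
      ‖∫ q₂ in Ioo (0:ℝ) (2*π),
        Complex.exp (-(((v₁^2 + v₂^2)/4 : ℝ) : ℂ)) *
        Complex.exp (-(((c*v₁*v₂/2) * Real.cos (q₁ - q₂ + φ) : ℝ) : ℂ)) *
        Complex.I^n * (((v₁ * Real.cos q₁ + v₂ * Real.cos q₂ : ℝ) : ℂ))^n *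
        Complex.exp (Complex.I * (((q₁ - q₂ : ℝ)) : ℂ))‖
      ≤ M * ((2*π*(Real.cos q₁ ^ 2) + 5*π)/4) := by
    intro q₁
    refine (norm_integral_le_integral_norm _).trans ?_
    have hdom : IntegrableOn
        (fun q₂ : ℝ => M * ((Real.cos q₁ ^ 2 + Real.cos q₂ ^ 2 + 2)/4)) (Ioo 0 (2*π)) :=
      (integrableOn_Q (Real.cos q₁ ^ 2)).const_mul M
    have step : ∫ q₂ in Ioo (0:ℝ) (2*π), ‖Complex.exp (-(((v₁^2 + v₂^2)/4 : ℝ) : ℂ)) *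
        Complex.exp (-(((c*v₁*v₂/2) * Real.cos (q₁ - q₂ + φ) : ℝ) : ℂ)) *
        Complex.I^n * (((v₁ * Real.cos q₁ + v₂ * Real.cos q₂ : ℝ) : ℂ))^n *
        Complex.exp (Complex.I * (((q₁ - q₂ : ℝ)) : ℂ))‖
        ≤ ∫ q₂ in Ioo (0:ℝ) (2*π), M * ((Real.cos q₁ ^ 2 + Real.cos q₂ ^ 2 + 2)/4) := by
      refine integral_mono_of_nonneg ?_ hdom ?_
      · exact Filter.Eventually.of_forall (fun q₂ => norm_nonneg _)
      · exact Filter.Eventually.of_forall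
          (fun q₂ => pointwise_bound n hn φ hc0 hc1 h1 h2 q₁ q₂)
    refine step.trans ?_
    rw [integral_const_mul, integral_Q]
  -- outer bound
  refine (norm_integral_le_integral_norm _).trans ?_
  have hdom : IntegrableOn (fun q₁ : ℝ => M * ((2*π*(Real.cos q₁ ^ 2) + 5*π)/4))
      (Ioo 0 (2*π)) := integrableOn_R.const_mul M
  have step : ∫ q₁ in Ioo (0:ℝ) (2*π), ‖∫ q₂ in Ioo (0:ℝ) (2*π),
        Complex.exp (-(((v₁^2 + v₂^2)/4 : ℝ) : ℂ)) *
        Complex.exp (-(((c*v₁*v₂/2) * Real.cos (q₁ - q₂ + φ) : ℝ) : ℂ)) *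
        Complex.I^n * (((v₁ * Real.cos q₁ + v₂ * Real.cos q₂ : ℝ) : ℂ))^n *
        Complex.exp (Complex.I * (((q₁ - q₂ : ℝ)) : ℂ))‖
      ≤ ∫ q₁ in Ioo (0:ℝ) (2*π), M * ((2*π*(Real.cos q₁ ^ 2) + 5*π)/4) := by
    refine integral_mono_of_nonneg ?_ hdom ?_
    · exact Filter.Eventually.of_forall (fun q₁ => norm_nonneg _)
    · exact Filter.Eventually.of_forall inner_bound
  refine step.trans ?_
  rw [integral_const_mul, integral_R, hMdef]
  ring_nf
  exact le_refl _


lemma final_eq (n : ℕ) (hn : 1 ≤ n) {c : ℝ} (hc0 : 0 ≤ c) (hc1 : c < 1) :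
    (1/(2*π)^2) * ((3*π^2 * Real.sqrt 2 ^ n) *
      ((π/4) * ((1-c)/4) ^ (-((n:ℝ)+2)/2) * Real.Gamma (((n:ℝ)+2)/2)))
    = (3/4) * ((2:ℝ)^((3*(n:ℝ))/2 - 1) * n * π * Real.Gamma ((n:ℝ)/2) /
        (1 - c)^(1 + (n:ℝ)/2)) := by
  have h1c : (0:ℝ) < 1 - c := by linarith
  have hn0 : (0:ℝ) < (n:ℝ) := by exact_mod_cast Nat.pos_of_ne_zero (by omega)
  -- Gamma((n+2)/2) = (n/2) * Gamma(n/2)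
  have hG : Real.Gamma (((n:ℝ)+2)/2) = ((n:ℝ)/2) * Real.Gamma ((n:ℝ)/2) := by
    have : ((n:ℝ)+2)/2 = (n:ℝ)/2 + 1 := by ring
    rw [this, Real.Gamma_add_one (by positivity)]
  -- sqrt 2 ^ n = 2 ^ (n/2)
  have hsqrt : Real.sqrt 2 ^ n = (2:ℝ) ^ ((n:ℝ)/2) := by
    rw [Real.sqrt_eq_rpow, ← Real.rpow_natCast ((2:ℝ) ^ ((1:ℝ)/2)) n,
      ← Real.rpow_mul (by norm_num : (0:ℝ) ≤ 2)]
    congr 1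
    ring
  -- ((1-c)/4) ^ (-(n+2)/2) = 2^(n+2) * ((1-c) ^ (1+n/2))⁻¹
  have hbase : ((1-c)/4 : ℝ) ^ (-((n:ℝ)+2)/2)
      = (2:ℝ) ^ ((n:ℝ)+2) * ((1-c) ^ (1+(n:ℝ)/2))⁻¹ := by
    rw [Real.div_rpow h1c.le (by norm_num : (0:ℝ) ≤ 4)]
    have h4 : (4:ℝ) ^ (-((n:ℝ)+2)/2) = ((2:ℝ) ^ ((n:ℝ)+2))⁻¹ := by
      rw [show (4:ℝ) = (2:ℝ)^(2:ℝ) by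
          rw [show (2:ℝ)^(2:ℝ) = (2:ℝ)^(2:ℕ) from Real.rpow_two 2]; norm_num,
        ← Real.rpow_mul (by norm_num : (0:ℝ) ≤ 2), ← Real.rpow_neg (by norm_num : (0:ℝ) ≤ 2)]
      congr 1
      ring
    have h1 : (1-c:ℝ) ^ (-((n:ℝ)+2)/2) = ((1-c) ^ (1+(n:ℝ)/2))⁻¹ := by
      rw [← Real.rpow_neg h1c.le]
      congr 1
      ring
    rw [h4, h1]
    field_simp
  -- 2^(n/2) * 2^(n+2) = 8 * 2^(3n/2 - 1)
  have hpow2 : (2:ℝ) ^ ((n:ℝ)/2) * (2:ℝ) ^ ((n:ℝ)+2) = 8 * (2:ℝ)^((3*(n:ℝ))/2 - 1) := by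
    rw [← Real.rpow_add (by norm_num : (0:ℝ) < 2)]
    rw [show (8:ℝ) = (2:ℝ)^(3:ℝ) by
      rw [show (2:ℝ)^(3:ℝ) = (2:ℝ)^(3:ℕ) by rw [← Real.rpow_natCast]; norm_num]; norm_num]
    rw [← Real.rpow_add (by norm_num : (0:ℝ) < 2)]
    congr 1
    ring
  have hA : (2:ℝ)^((3*(n:ℝ))/2 - 1) = ((2:ℝ) ^ ((n:ℝ)/2) * (2:ℝ) ^ ((n:ℝ)+2))/8 := by
    rw [hpow2]; ring
  rw [hG, hsqrt, hbase, div_eq_mul_inv (_ * _ * _ * _), hA]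
  have hπ : π ≠ 0 := pi_ne_zero
  field_simp
  ring

/-- The coefficient `Ω_n` of the power-series expansion, as a 4-fold integral (Eq. (28)). -/
noncomputable def OmegaCoeff (n : ℕ) (c φ : ℝ) : ℂ :=
  -(1/(2*π)^2 : ℂ) * ∫ v₁ in Set.Ioi (0:ℝ), ∫ v₂ in Set.Ioi (0:ℝ),
    ∫ q₁ in Set.Ioo (0:ℝ) (2*π), ∫ q₂ in Set.Ioo (0:ℝ) (2*π),
      Complex.exp (-(((v₁^2 + v₂^2)/4 : ℝ) : ℂ)) *
      Complex.exp (-(((c*v₁*v₂/2) * Real.cos (q₁ - q₂ + φ) : ℝ) : ℂ)) *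
      Complex.I^n * (((v₁ * Real.cos q₁ + v₂ * Real.cos q₂ : ℝ) : ℂ))^n *
      Complex.exp (Complex.I * (((q₁ - q₂ : ℝ)) : ℂ))

/-- The bound (29) on the coefficients `Ω_n`. -/
theorem OmegaCoeff_bound (n : ℕ) (hn : 1 ≤ n) (c φ : ℝ) (hc0 : 0 ≤ c) (hc1 : c < 1) :
    ‖OmegaCoeff n c φ‖ <
      (2:ℝ)^((3*(n:ℝ))/2 - 1) * n * π * Real.Gamma ((n:ℝ)/2) /
        (1 - c)^(1 + (n:ℝ)/2) := by
  have h1c : (0:ℝ) < 1 - c := by linarith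
  have ha : (0:ℝ) < (1-c)/4 := by positivity
  have hn0 : (0:ℝ) < (n:ℝ) := by exact_mod_cast Nat.pos_of_ne_zero (by omega)
  set K := 3*π^2 * Real.sqrt 2 ^ n with hK
  have hK0 : 0 ≤ K := by positivity
  set Fs : ℝ → ℝ → ℝ := fun v₁ v₂ =>
    Real.sqrt (v₁^2+v₂^2) ^ n * Real.exp (-((1-c)/4) * (v₁^2+v₂^2)) with hFs
  set H : ℝ → ℝ := fun v₁ => ∫ v₂ in Ioi (0:ℝ), Fs v₁ v₂ with hH
  -- the inner 2-fold q integral as a function of v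
  set g : ℝ → ℝ → ℂ := fun v₁ v₂ =>
    ∫ q₁ in Set.Ioo (0:ℝ) (2*π), ∫ q₂ in Set.Ioo (0:ℝ) (2*π),
      Complex.exp (-(((v₁^2 + v₂^2)/4 : ℝ) : ℂ)) *
      Complex.exp (-(((c*v₁*v₂/2) * Real.cos (q₁ - q₂ + φ) : ℝ) : ℂ)) *
      Complex.I^n * (((v₁ * Real.cos q₁ + v₂ * Real.cos q₂ : ℝ) : ℂ))^n *
      Complex.exp (Complex.I * (((q₁ - q₂ : ℝ)) : ℂ)) with hg
  have hprodInt : Integrable (fun p : ℝ × ℝ => Fs p.1 p.2)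
      ((volume.restrict (Ioi (0:ℝ))).prod (volume.restrict (Ioi (0:ℝ)))) := by
    rw [Measure.prod_restrict, ← Measure.volume_eq_prod]
    exact (integrable_F n ha).integrableOn
  have hHint : Integrable H (volume.restrict (Ioi (0:ℝ))) := hprodInt.integral_prod_left
  -- norm of the constant prefactor
  have hconst : ‖(-(1/(2*π)^2) : ℂ)‖ = 1/(2*π)^2 := by
    have he : (-(1/(2*π)^2) : ℂ) = ((-(1/(2*π)^2) : ℝ) : ℂ) := by push_cast; ring
    rw [he, Complex.norm_real, Real.norm_eq_abs, abs_neg,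
      abs_of_pos (by positivity : (0:ℝ) < 1/(2*π)^2)]
  -- inner v₂ bound
  have inner_v : ∀ v₁ ∈ Ioi (0:ℝ), ‖∫ v₂ in Ioi (0:ℝ), g v₁ v₂‖ ≤ K * H v₁ := by
    intro v₁ hv₁
    refine (norm_integral_le_integral_norm _).trans ?_
    have hdom : Integrable (fun v₂ : ℝ => K * Fs v₁ v₂) (volume.restrict (Ioi (0:ℝ))) :=
      ((integrable_F_slice n ha v₁).const_mul K).integrableOn
    have step : ∫ v₂ in Ioi (0:ℝ), ‖g v₁ v₂‖ ≤ ∫ v₂ in Ioi (0:ℝ), K * Fs v₁ v₂ := by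
      refine integral_mono_of_nonneg
        (Filter.Eventually.of_forall (fun v₂ => norm_nonneg _)) hdom ?_
      filter_upwards [ae_restrict_mem measurableSet_Ioi] with v₂ hv₂
      exact q_integral_bound n hn φ hc0 hc1 (le_of_lt hv₁) (le_of_lt hv₂)
    refine step.trans ?_
    rw [integral_const_mul]
  -- outer v₁ bound
  have outer : ‖∫ v₁ in Ioi (0:ℝ), ∫ v₂ in Ioi (0:ℝ), g v₁ v₂‖
      ≤ K * ∫ v₁ in Ioi (0:ℝ), H v₁ := by
    refine (norm_integral_le_integral_norm _).trans ?_
    have hdom : Integrable (fun v₁ : ℝ => K * H v₁) (volume.restrict (Ioi (0:ℝ))) :=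
      hHint.const_mul K
    have step : ∫ v₁ in Ioi (0:ℝ), ‖∫ v₂ in Ioi (0:ℝ), g v₁ v₂‖
        ≤ ∫ v₁ in Ioi (0:ℝ), K * H v₁ := by
      refine integral_mono_of_nonneg
        (Filter.Eventually.of_forall (fun v₁ => norm_nonneg _)) hdom ?_
      filter_upwards [ae_restrict_mem measurableSet_Ioi] with v₁ hv₁
      exact inner_v v₁ hv₁
    refine step.trans ?_
    rw [integral_const_mul]
  -- compute the value of ∫ H
  have hval : ∫ v₁ in Ioi (0:ℝ), H v₁
      = (π/4) * ((1-c)/4) ^ (-((n:ℝ)+2)/2) * Real.Gamma (((n:ℝ)+2)/2) :=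
    integral_F_quarter n ha
  -- assemble
  have hbound : ‖OmegaCoeff n c φ‖
      ≤ (1/(2*π)^2) * (K *
        ((π/4) * ((1-c)/4) ^ (-((n:ℝ)+2)/2) * Real.Gamma (((n:ℝ)+2)/2))) := by
    rw [OmegaCoeff, norm_mul, hconst]
    refine mul_le_mul_of_nonneg_left ?_ (by positivity : (0:ℝ) ≤ 1/(2*π)^2)
    rw [← hval]
    exact outer
  have heq := final_eq n hn hc0 hc1
  rw [heq] at hbound
  have hRHS : (0:ℝ) < (2:ℝ)^((3*(n:ℝ))/2 - 1) * n * π * Real.Gamma ((n:ℝ)/2) /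
      (1 - c)^(1 + (n:ℝ)/2) := by
    apply div_pos
    · have hΓ : 0 < Real.Gamma ((n:ℝ)/2) := Real.Gamma_pos_of_pos (by positivity)
      have := Real.rpow_pos_of_pos (by norm_num : (0:ℝ) < 2) ((3*(n:ℝ))/2 - 1)
      positivity
    · exact Real.rpow_pos_of_pos h1c _
  linarith
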